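/- arXiv:0906.2687 — 2 statements merged into one kernel-verified Lean document; each statement's English description precedes it below -/
import Mathlib

section
/- Let A be a finite nonempty set and T a symmetric, irreflexive, saturated relation on A. If Q, Q₁, Q₂ ∈ 𝒫^T(A) satisfy Q₁ ⊆ Q^T, Q₂ ⊆ Q^T, and ((Q ∪ Q₁)^T)^T = ((Q ∪ Q₂)^T)^T, then Q₁ = Q₂; i.e. the partial operation Q ⊕ Q₁ := ((Q ∪ Q₁)^T)^T on 𝒫^T(A) satisfies the cancellation law. -/
/-- For `B ⊆ A`, `B^T := {l ∈ A | ∀ l₁ ∈ B, (l₁, l) ∈ T}`. -/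
def polar {α : Type*} (T : α → α → Prop) (B : Set α) : Set α :=
  {l | ∀ l₁ ∈ B, T l₁ l}

/-- `𝒫_T(A)`: subsets whose distinct elements are pairwise related by `T`. -/
def PTset {α : Type*} (T : α → α → Prop) : Set (Set α) :=
  {U | ∀ l ∈ U, ∀ l₁ ∈ U, l₁ ≠ l → T l l₁}

/-- `𝒫^T(A)`: the image of `𝒫_T(A)` under `B ↦ B^T`. -/
def PTup {α : Type*} (T : α → α → Prop) : Set (Set α) :=
  polar T '' PTset T

/-- `T` is symmetric: for all `l ≠ l₁`, `(l, l₁) ∈ T ↔ (l₁, l) ∈ T`. -/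
def SymmRel {α : Type*} (T : α → α → Prop) : Prop :=
  ∀ l l₁, l ≠ l₁ → (T l l₁ ↔ T l₁ l)

/-- `T` is irreflexive. -/
def IrreflRel {α : Type*} (T : α → α → Prop) : Prop :=
  ∀ l, ¬ T l l

/-- `M` is a maximal element of `𝒫_T(A)` with respect to inclusion. -/
def MaxPT {α : Type*} (T : α → α → Prop) (M : Set α) : Prop :=
  M ∈ PTset T ∧ ∀ M' ∈ PTset T, M ⊆ M' → M' = M

/-- `T` is saturated: for every maximal `M ∈ 𝒫_T(A)` and every `B ⊆ M`,
`B^T = ((M \ B)^T)^T`. -/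
def SaturatedRel {α : Type*} (T : α → α → Prop) : Prop :=
  ∀ M, MaxPT T M → ∀ B ⊆ M, polar T B = polar T (polar T (M \ B))
section Aux
variable {α : Type*} {T : α → α → Prop}

lemma mem_polar' {B : Set α} {x : α} : x ∈ polar T B ↔ ∀ l₁ ∈ B, T l₁ x := Iff.rfl

lemma polar_anti {B C : Set α} (h : B ⊆ C) : polar T C ⊆ polar T B :=
  fun _ hx l₁ hl₁ => hx l₁ (h hl₁)

lemma Tsymm' (hsymm : SymmRel T) {a b : α} (h : T a b) : T b a := by
  by_cases hab : a = b
  · exact hab ▸ h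
  · exact (hsymm a b hab).mp h

lemma subset_pp (hsymm : SymmRel T) (B : Set α) : B ⊆ polar T (polar T B) :=
  fun x hx y hy => Tsymm' hsymm (hy x hx)

lemma ppp (hsymm : SymmRel T) (B : Set α) :
    polar T (polar T (polar T B)) = polar T B :=
  subset_antisymm (polar_anti (subset_pp hsymm B)) (subset_pp hsymm (polar T B))

lemma polar_union (B C : Set α) :
    polar T (B ∪ C) = polar T B ∩ polar T C := by
  ext x
  simp only [mem_polar', Set.mem_union, Set.mem_inter_iff, or_imp, forall_and]

lemma exists_maxPT [Fintype α] {U : Set α} (hU : U ∈ PTset T) :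
    ∃ M, MaxPT T M ∧ U ⊆ M := by
  obtain ⟨M, hM, hmax⟩ := Set.Finite.exists_maximalFor id {V | V ∈ PTset T ∧ U ⊆ V}
      (Set.toFinite _) ⟨U, hU, subset_rfl⟩
  exact ⟨M, ⟨hM.1, fun M' hM' hsub => subset_antisymm (hmax ⟨hM', hM.2.trans hsub⟩ hsub) hsub⟩, hM.2⟩

lemma sat' (hsat : SaturatedRel T) {M B : Set α} (hM : MaxPT T M) (hB : B ⊆ M) :
    polar T (polar T B) = polar T (M \ B) := by
  have h := hsat M hM (M \ B) Set.diff_subset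
  rw [Set.diff_diff_cancel_left hB] at h
  exact h.symm

lemma cancel_aux [Fintype α] (hsymm : SymmRel T) (hirr : IrreflRel T)
    (hsat : SaturatedRel T) {U U₁ : Set α} (hU : U ∈ PTset T) (hU₁ : U₁ ∈ PTset T)
    (h1 : polar T U₁ ⊆ polar T (polar T U)) :
    polar T U₁ = polar T (polar T U) ∩
      polar T (polar T (polar T U ∪ polar T U₁)) := by
  obtain ⟨M, hM, hUM⟩ := exists_maxPT hU
  obtain ⟨M₁, hM₁, hUM₁⟩ := exists_maxPT hU₁
  set Q := polar T U with hQdef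
  set Q₁ := polar T U₁ with hQ₁def
  set D₀ := M \ U with hD₀def
  set D₁ := M₁ \ U₁ with hD₁def
  -- polar D₀ = polar Q, D₀ ⊆ Q
  have hpD0 : polar T Q = polar T D₀ := sat' hsat hM hUM
  have hppD0 : polar T (polar T D₀) = Q := by
    have h := sat' hsat hM (Set.diff_subset : M \ U ⊆ M)
    rw [Set.diff_diff_cancel_left hUM] at h
    exact h
  have hD0Q : D₀ ⊆ Q := hppD0 ▸ subset_pp hsymm D₀
  have hpD1 : polar T Q₁ = polar T D₁ := sat' hsat hM₁ hUM₁
  have hppD1 : polar T (polar T D₁) = Q₁ := by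
    have h := sat' hsat hM₁ (Set.diff_subset : M₁ \ U₁ ⊆ M₁)
    rw [Set.diff_diff_cancel_left hUM₁] at h
    exact h
  have hD1Q1 : D₁ ⊆ Q₁ := hppD1 ▸ subset_pp hsymm D₁
  -- D₀ and D₁ are disjoint, their union is a clique
  have hQ1pQ : Q₁ ⊆ polar T Q := h1
  have hdisj : ∀ x, x ∈ D₀ → x ∉ D₁ := by
    intro x hx0 hx1
    exact hirr x ((hQ1pQ (hD1Q1 hx1)) x (hD0Q hx0))
  have hD01 : D₀ ∪ D₁ ∈ PTset T := by
    rintro l (hl | hl) l₁ (hl₁ | hl₁) hne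
    · exact hM.1 l (Set.diff_subset hl) l₁ (Set.diff_subset hl₁) hne
    · exact hQ1pQ (hD1Q1 hl₁) l (hD0Q hl)
    · exact Tsymm' hsymm (hQ1pQ (hD1Q1 hl) l₁ (hD0Q hl₁))
    · exact hM₁.1 l (Set.diff_subset hl) l₁ (Set.diff_subset hl₁) hne
  obtain ⟨M₂, hM₂, hDM₂⟩ := exists_maxPT hD01
  set D₂ := M₂ \ (D₀ ∪ D₁) with hD₂def
  have hD0M₂ : D₀ ⊆ M₂ := (Set.subset_union_left).trans hDM₂
  have hD1M₂ : D₁ ⊆ M₂ := (Set.subset_union_right).trans hDM₂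
  have hsplit : M₂ \ D₁ = D₀ ∪ D₂ := by
    ext x
    constructor
    · rintro ⟨hxM, hxD1⟩
      by_cases hx0 : x ∈ D₀
      · exact Or.inl hx0
      · exact Or.inr ⟨hxM, fun h => h.elim hx0 hxD1⟩
    · rintro (hx | ⟨hxM, hx⟩)
      · exact ⟨hD0M₂ hx, hdisj x hx⟩
      · exact ⟨hxM, fun h => hx (Or.inr h)⟩
  -- key computations
  have keyQ1 : Q₁ = polar T (D₀ ∪ D₂) := by
    have h := sat' hsat hM₂ hD1M₂
    rw [hsplit] at h
    calc Q₁ = polar T (polar T (polar T U₁)) := (ppp hsymm U₁).symm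
    _ = polar T (polar T Q₁) := rfl
    _ = polar T (polar T D₁) := by rw [hpD1]
    _ = polar T (D₀ ∪ D₂) := h
  have keyW : polar T D₂ = polar T (polar T (Q ∪ Q₁)) := by
    have h := sat' hsat hM₂ hDM₂
    have hunion : polar T (D₀ ∪ D₁) = polar T (Q ∪ Q₁) := by
      rw [polar_union, polar_union, ← hpD0, ← hpD1]
    rw [hunion] at h
    exact h.symm
  calc Q₁ = polar T (D₀ ∪ D₂) := keyQ1
  _ = polar T D₀ ∩ polar T D₂ := polar_union _ _
  _ = polar T Q ∩ polar T (polar T (Q ∪ Q₁)) := by rw [← hpD0, keyW]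

end Aux

theorem stmt4 {α : Type*} [Fintype α] [Nonempty α] (T : α → α → Prop)
    (hsymm : SymmRel T) (hirr : IrreflRel T) (hsat : SaturatedRel T) :
    ∀ Q ∈ PTup T, ∀ Q₁ ∈ PTup T, ∀ Q₂ ∈ PTup T,
      Q₁ ⊆ polar T Q → Q₂ ⊆ polar T Q →
      polar T (polar T (Q ∪ Q₁)) = polar T (polar T (Q ∪ Q₂)) →
      Q₁ = Q₂ := by
  rintro Q ⟨U, hU, rfl⟩ Q₁ ⟨U₁, hU₁, rfl⟩ Q₂ ⟨U₂, hU₂, rfl⟩ h1 h2 heq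
  rw [cancel_aux hsymm hirr hsat hU hU₁ h1, cancel_aux hsymm hirr hsat hU hU₂ h2, heq]
end

section
/- Let A be a finite nonempty set and T a symmetric, irreflexive, saturated relation on A. Suppose Q ∈ 𝒫^T(A), and V', W ∈ 𝒫_T(A) are such that Q = (V'^T)^T and Q^T = (W^T)^T. Then V' ∪ W is a maximal element of 𝒫_T(A) with respect to inclusion. -/
lemma subset_polar_polar {α : Type*} {T : α → α → Prop} (hsymm : SymmRel T)
    (B : Set α) : B ⊆ polar T (polar T B) := by
  intro x hx m hm
  have hxm : T x m := hm x hx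
  by_cases h : m = x
  · subst h; exact hxm
  · exact (hsymm x m (fun e => h e.symm)).mp hxm

theorem stmt8 {α : Type*} [Fintype α] [Nonempty α] (T : α → α → Prop)
    (hsymm : SymmRel T) (hirr : IrreflRel T) (hsat : SaturatedRel T)
    (Q : Set α) (hQ : Q ∈ PTup T) (V' W : Set α)
    (hV' : V' ∈ PTset T) (hW : W ∈ PTset T)
    (hQeq : Q = polar T (polar T V')) (hQT : polar T Q = polar T (polar T W)) :
    MaxPT T (V' ∪ W) := by
  have hVQ : V' ⊆ Q := hQeq ▸ subset_polar_polar hsymm V'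
  have hWQ : W ⊆ polar T Q := hQT ▸ subset_polar_polar hsymm W
  have hmix : ∀ x ∈ V', ∀ y ∈ W, T x y := fun x hx y hy => hWQ hy x (hVQ hx)
  have hclique : V' ∪ W ∈ PTset T := by
    intro l hl l₁ hl₁ hne
    rcases hl with hl | hl <;> rcases hl₁ with hl₁ | hl₁
    · exact hV' l hl l₁ hl₁ hne
    · exact hmix l hl l₁ hl₁
    · exact (hsymm l l₁ (fun e => hne e.symm)).mpr (hmix l₁ hl₁ l hl)
    · exact hW l hl l₁ hl₁ hne
  refine ⟨hclique, fun M' hM' hsub => ?_⟩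
  apply Set.Subset.antisymm _ hsub
  intro z hz
  by_contra hzout
  have hzV : z ∉ V' := fun h => hzout (Or.inl h)
  have hzW : z ∉ W := fun h => hzout (Or.inr h)
  have hzpV : z ∈ polar T V' := fun v hv =>
    hM' v (hsub (Or.inl hv)) z hz (fun e => hzV (e ▸ hv))
  have hzpW : z ∈ polar T W := fun w hw =>
    hM' w (hsub (Or.inr hw)) z hz (fun e => hzW (e ▸ hw))
  -- z ∈ polar T Q = polar T (polar T W)
  have hzQ : z ∈ polar T (polar T W) := by
    rw [← hQT, hQeq]
    intro q hq
    by_cases e : q = z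
    · exact absurd (e ▸ hq z hzpV) (hirr z)
    · exact (hsymm q z e).mpr (hq z hzpV)
  exact hirr z (hzQ z hzpW)
end
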